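/- Let n ∈ ℕ and let P₁,…,Pₙ be probability measures on ℝ, each supported on exactly two points, with finite third absolute moments, positive standard deviations σᵢ := σ(Pᵢ) > 0, and with centred third moments ∫(x−μ(Pᵢ))³ dPᵢ(x) all ≥ 0. Put Qᵢ := ½(δ_{−σᵢ} + δ_{σᵢ}), σ := (σ₁² + ⋯ + σₙ²)^{1/2}, ρᵢ := ρ(Pᵢ), and f(x) := x³. Then equality holds: |∫ f d(standardization of P₁∗⋯∗Pₙ) − ∫ f d(standardization of Q₁∗⋯∗Qₙ)| = Σᵢ₌₁ⁿ (σᵢ³/σ³) · B(ρᵢ). -/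

import Mathlib

open MeasureTheory ProbabilityTheory Real Filter Topology

noncomputable section

/-- The mean of a measure on `ℝ`. -/
def mmean (P : Measure ℝ) : ℝ := ∫ x, x ∂P

/-- The variance of a measure on `ℝ`. -/
def mvar (P : Measure ℝ) : ℝ := ∫ x, (x - mmean P) ^ 2 ∂P

/-- The standard deviation of a measure on `ℝ`. -/
def msd (P : Measure ℝ) : ℝ := Real.sqrt (mvar P)

/-- The standardization of a measure on `ℝ`: the pushforward under
`x ↦ (x - μ(P)) / σ(P)`. -/
def standardize (P : Measure ℝ) : Measure ℝ :=
  P.map fun x => (x - mmean P) / msd P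

/-- The standardized third absolute moment `ρ(P)`. -/
def stdMoment3 (P : Measure ℝ) : ℝ := ∫ x, |x| ^ 3 ∂(standardize P)

/-- The function `B(ρ) = √(ρ²/2 + (ρ/2)√(ρ²+8) − 2)`. -/
def Bfn (ρ : ℝ) : ℝ := Real.sqrt (ρ ^ 2 / 2 + ρ / 2 * Real.sqrt (ρ ^ 2 + 8) - 2)

/-- The convolution `P₁ ∗ ⋯ ∗ Pₙ` of a finite family of measures on `ℝ`,
realized as the pushforward of the product measure under summation. -/
def convFamily {n : ℕ} (P : Fin n → Measure ℝ) : Measure ℝ :=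
  Measure.map (fun x => ∑ i, x i) (Measure.pi P)

/-- The standardization of the convolution `P₁ ∗ ⋯ ∗ Pₙ`, taken with respect to
its mean `μ(P₁) + ⋯ + μ(Pₙ)` and its variance `σ(P₁)² + ⋯ + σ(Pₙ)²`. -/
def stdConvFamily {n : ℕ} (P : Fin n → Measure ℝ) : Measure ℝ :=
  (convFamily P).map fun x =>
    (x - ∑ i, mmean (P i)) / Real.sqrt (∑ i, msd (P i) ^ 2)

/-- The symmetric two-point law `½(δ₋σ + δ_σ)`. -/
def twoPoint (σ : ℝ) : Measure ℝ :=
  (1 / 2 : ENNReal) • Measure.dirac (-σ) + (1 / 2 : ENNReal) • Measure.dirac σ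


open scoped ENNReal

section AuxProd

theorem my_integrable_prod {n : ℕ} (P : Fin n → Measure ℝ) [∀ i, SigmaFinite (P i)]
    {f : Fin n → ℝ → ℝ} (hf : ∀ i, Integrable (f i) (P i)) :
    Integrable (fun x : Fin n → ℝ => ∏ i, f i (x i)) (Measure.pi P) := by
  induction n with
  | zero => rw [Measure.pi_of_empty]
            simp only [Finset.univ_eq_empty, Finset.prod_empty]
            exact integrable_const _
  | succ n n_ih =>
      have := ((measurePreserving_piFinSuccAbove P 0).symm)
      rw [← this.integrable_comp_emb (MeasurableEquiv.measurableEmbedding _)]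
      simp_rw [MeasurableEquiv.piFinSuccAbove_symm_apply, Fin.insertNthEquiv,
        Fin.prod_univ_succ, Fin.insertNth_zero]
      simp only [Fin.zero_succAbove, cast_eq, Function.comp_def, Fin.cons_zero, Fin.cons_succ]
      have : Integrable (fun (x : Fin n → ℝ) ↦ ∏ j, f (Fin.succ j) (x j))
          (Measure.pi fun j => P (Fin.succ j)) := n_ih _ (fun i ↦ hf _)
      exact Integrable.mul_prod (hf 0) this

theorem my_integral_prod {n : ℕ} (P : Fin n → Measure ℝ) [∀ i, SigmaFinite (P i)]
    (f : Fin n → ℝ → ℝ) :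
    ∫ x : Fin n → ℝ, ∏ i, f i (x i) ∂Measure.pi P = ∏ i, ∫ x, f i x ∂(P i) := by
  induction n with
  | zero => simp [measureReal_def, Measure.pi_empty_univ]
  | succ n n_ih =>
      calc
        _ = ∫ x : ℝ × (Fin n → ℝ),
            f 0 x.1 * ∏ i : Fin n, f (Fin.succ i) (x.2 i)
              ∂((P 0).prod (Measure.pi fun j => P (Fin.succ j))) := by
          rw [← ((measurePreserving_piFinSuccAbove P 0).symm).integral_comp']
          simp_rw [MeasurableEquiv.piFinSuccAbove_symm_apply, Fin.insertNthEquiv,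
            Fin.prod_univ_succ, Fin.insertNth_zero, Equiv.coe_fn_mk, Fin.cons_succ,
            Fin.zero_succAbove, cast_eq, Fin.cons_zero]
        _ = (∫ x, f 0 x ∂(P 0)) * ∏ i : Fin n, ∫ x, f (Fin.succ i) x ∂(P (Fin.succ i)) := by
          rw [← n_ih, ← integral_prod_mul]
        _ = ∏ i, ∫ x, f i x ∂(P i) := by rw [Fin.prod_univ_succ]

theorem conv_third {n : ℕ} (P : Fin n → Measure ℝ) [∀ i, IsProbabilityMeasure (P i)]
    (m : Fin n → ℝ)
    (hint : ∀ i (c : ℕ), Integrable (fun x => (x - m i) ^ c) (P i))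
    (hcent : ∀ i, ∫ x, (x - m i) ∂(P i) = 0) :
    ∫ x : Fin n → ℝ, (∑ i, (x i - m i)) ^ 3 ∂Measure.pi P
      = ∑ i, ∫ x, (x - m i) ^ 3 ∂(P i) := by
  classical
  set cnt : Fin n → Fin n → Fin n → Fin n → ℕ := fun i j k l =>
    (if l = i then 1 else 0) + (if l = j then 1 else 0) + (if l = k then 1 else 0) with hcnt
  set V : Fin n → Fin n → Fin n → ℝ := fun i j k =>
    ∏ l, ∫ x, (x - m l) ^ cnt i j k l ∂(P l) with hV
  -- pointwise expansion
  have hpt : ∀ x : Fin n → ℝ, (∑ i, (x i - m i)) ^ 3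
      = ∑ i, ∑ j, ∑ k, ∏ l, (x l - m l) ^ cnt i j k l := by
    intro x
    have base : ∀ i : Fin n, (∏ l, (x l - m l) ^ (if l = i then 1 else 0)) = x i - m i := by
      intro i
      simp [pow_ite]
    have h1 : ∀ i j k : Fin n, (∏ l, (x l - m l) ^ cnt i j k l)
        = (x i - m i) * ((x j - m j) * (x k - m k)) := by
      intro i j k
      simp only [hcnt, pow_add, Finset.prod_mul_distrib, base]
      ring
    simp_rw [h1]
    rw [show (∑ i, (x i - m i)) ^ 3
        = (∑ i, (x i - m i)) * ((∑ j, (x j - m j)) * (∑ k, (x k - m k))) from by ring]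
    simp only [Finset.sum_mul, Finset.mul_sum]
    refine Finset.sum_congr rfl fun i _ => Finset.sum_congr rfl fun j _ =>
      Finset.sum_congr rfl fun k _ => by ring
  -- integrate
  have hterm_int : ∀ i j k : Fin n,
      Integrable (fun x : Fin n → ℝ => ∏ l, (x l - m l) ^ cnt i j k l) (Measure.pi P) :=
    fun i j k => my_integrable_prod P (fun l => hint l _)
  have hstep : ∫ x : Fin n → ℝ, (∑ i, (x i - m i)) ^ 3 ∂Measure.pi P
      = ∑ i, ∑ j, ∑ k, V i j k := by
    simp_rw [hpt]
    rw [integral_finset_sum _ (fun i _ => integrable_finset_sum _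
      (fun j _ => integrable_finset_sum _ (fun k _ => hterm_int i j k)))]
    refine Finset.sum_congr rfl fun i _ => ?_
    rw [integral_finset_sum _ (fun j _ => integrable_finset_sum _ (fun k _ => hterm_int i j k))]
    refine Finset.sum_congr rfl fun j _ => ?_
    rw [integral_finset_sum _ (fun k _ => hterm_int i j k)]
    refine Finset.sum_congr rfl fun k _ => ?_
    simpa only [hV] using my_integral_prod P (fun l t => (t - m l) ^ cnt i j k l)
  -- off-diagonal vanishes
  have hzero : ∀ i j k : Fin n, ¬(j = i ∧ k = i) → V i j k = 0 := by
    intro i j k h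
    have hwit : ∃ l₀ : Fin n, cnt i j k l₀ = 1 := by
      by_cases hji : j = i
      · subst hji
        have hki : k ≠ j := fun hk => h ⟨rfl, hk⟩
        exact ⟨k, by simp [hcnt, hki]⟩
      · by_cases hki : k = i
        · subst hki
          exact ⟨j, by simp [hcnt, hji]⟩
        · by_cases hkj : k = j
          · subst hkj
            exact ⟨i, by simp [hcnt, Ne.symm hji]⟩
          · exact ⟨i, by simp [hcnt, Ne.symm hji, Ne.symm hki]⟩
    obtain ⟨l₀, hl₀⟩ := hwit
    refine Finset.prod_eq_zero (Finset.mem_univ l₀) ?_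
    rw [hl₀]
    simpa using hcent l₀
  -- diagonal
  have hdiag : ∀ i : Fin n, V i i i = ∫ x, (x - m i) ^ 3 ∂(P i) := by
    intro i
    have hoff : ∀ l ∈ Finset.univ, l ≠ i → (∫ x, (x - m l) ^ cnt i i i l ∂(P l)) = 1 := by
      intro l _ hl
      rw [show cnt i i i l = 0 from by simp [hcnt, hl]]
      simp
    calc V i i i = ∫ x, (x - m i) ^ cnt i i i i ∂(P i) :=
          Finset.prod_eq_single i hoff (fun h => absurd (Finset.mem_univ i) h)
      _ = _ := by rw [show cnt i i i i = 3 from by simp [hcnt]]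
  rw [hstep]
  refine Finset.sum_congr rfl fun i _ => ?_
  rw [Finset.sum_eq_single_of_mem i (Finset.mem_univ i) (fun j _ hj =>
    Finset.sum_eq_zero (fun k _ => hzero i j k (fun hc => hj hc.1)))]
  rw [Finset.sum_eq_single_of_mem i (Finset.mem_univ i) (fun k _ hk =>
    hzero i i k (fun hc => hk hc.2))]
  exact hdiag i

end AuxProd

section AuxDirac

theorem integrable_dirac' {a : ℝ} (f : ℝ → ℝ) : Integrable f (Measure.dirac a) := by
  have h : f =ᵐ[Measure.dirac a] fun _ => f a := MeasureTheory.ae_eq_dirac f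
  exact (integrable_const (f a)).congr h.symm

theorem integrable_smul_dirac {a : ℝ} {c : ℝ≥0∞} (hc : c ≠ ⊤) (f : ℝ → ℝ) :
    Integrable f (c • Measure.dirac a) := by
  rcases eq_or_ne c 0 with h | h
  · simp [h]
  · exact (integrable_smul_measure h hc).2 (integrable_dirac' f)

theorem integrable_twoPointLike {a b : ℝ} {c d : ℝ≥0∞} (hc : c ≠ ⊤) (hd : d ≠ ⊤) (f : ℝ → ℝ) :
    Integrable f (c • Measure.dirac a + d • Measure.dirac b) :=
  Integrable.add_measure (integrable_smul_dirac hc f) (integrable_smul_dirac hd f)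

theorem integral_twoPointLike {a b : ℝ} {c d : ℝ≥0∞} (hc : c ≠ ⊤) (hd : d ≠ ⊤) (f : ℝ → ℝ) :
    ∫ x, f x ∂(c • Measure.dirac a + d • Measure.dirac b) = c.toReal * f a + d.toReal * f b := by
  rw [integral_add_measure (integrable_smul_dirac hc f) (integrable_smul_dirac hd f),
    integral_smul_measure, integral_smul_measure, integral_dirac f a, integral_dirac f b]
  simp [smul_eq_mul]

end AuxDirac

section TwoPointFacts
variable {P : Measure ℝ} {a b p : ℝ}

theorem tp_integral (hp0 : 0 ≤ p) (hp1 : p ≤ 1)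
    (hP : P = ENNReal.ofReal p • Measure.dirac a + ENNReal.ofReal (1 - p) • Measure.dirac b)
    (f : ℝ → ℝ) : ∫ x, f x ∂P = p * f a + (1 - p) * f b := by
  rw [hP, integral_twoPointLike ENNReal.ofReal_ne_top ENNReal.ofReal_ne_top,
    ENNReal.toReal_ofReal hp0, ENNReal.toReal_ofReal (by linarith)]

theorem tp_integrable
    (hP : P = ENNReal.ofReal p • Measure.dirac a + ENNReal.ofReal (1 - p) • Measure.dirac b)
    (f : ℝ → ℝ) : Integrable f P :=
  hP ▸ integrable_twoPointLike ENNReal.ofReal_ne_top ENNReal.ofReal_ne_top f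

theorem tp_mmean (hp0 : 0 ≤ p) (hp1 : p ≤ 1)
    (hP : P = ENNReal.ofReal p • Measure.dirac a + ENNReal.ofReal (1 - p) • Measure.dirac b) :
    mmean P = p * a + (1 - p) * b := by
  rw [mmean, tp_integral hp0 hp1 hP]

theorem tp_mvar (hp0 : 0 ≤ p) (hp1 : p ≤ 1)
    (hP : P = ENNReal.ofReal p • Measure.dirac a + ENNReal.ofReal (1 - p) • Measure.dirac b) :
    mvar P = (p * (1 - p)) * (a - b) ^ 2 := by
  rw [mvar, tp_integral hp0 hp1 hP, tp_mmean hp0 hp1 hP]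
  ring

theorem tp_msd (hp0 : 0 ≤ p) (hp1 : p ≤ 1)
    (hP : P = ENNReal.ofReal p • Measure.dirac a + ENNReal.ofReal (1 - p) • Measure.dirac b) :
    msd P = Real.sqrt (p * (1 - p)) * |a - b| := by
  rw [msd, tp_mvar hp0 hp1 hP, Real.sqrt_mul (by nlinarith), Real.sqrt_sq_eq_abs]

theorem tp_cent (hp0 : 0 ≤ p) (hp1 : p ≤ 1)
    (hP : P = ENNReal.ofReal p • Measure.dirac a + ENNReal.ofReal (1 - p) • Measure.dirac b) :
    ∫ x, (x - mmean P) ∂P = 0 := by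
  rw [tp_integral hp0 hp1 hP, tp_mmean hp0 hp1 hP]
  ring

theorem tp_third (hp0 : 0 ≤ p) (hp1 : p ≤ 1)
    (hP : P = ENNReal.ofReal p • Measure.dirac a + ENNReal.ofReal (1 - p) • Measure.dirac b) :
    ∫ x, (x - mmean P) ^ 3 ∂P = p * (1 - p) * (1 - 2 * p) * (a - b) ^ 3 := by
  rw [tp_integral hp0 hp1 hP, tp_mmean hp0 hp1 hP]
  ring

theorem tp_prob (hp0 : 0 ≤ p) (hp1 : p ≤ 1)
    (hP : P = ENNReal.ofReal p • Measure.dirac a + ENNReal.ofReal (1 - p) • Measure.dirac b) :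
    IsProbabilityMeasure P := by
  constructor
  rw [hP]
  simp only [Measure.add_apply, Measure.smul_apply, Measure.dirac_apply' _ MeasurableSet.univ,
    Set.indicator_univ, smul_eq_mul, mul_one, Pi.one_apply]
  rw [← ENNReal.ofReal_add hp0 (by linarith)]
  norm_num

theorem tp_stdMoment3 (hab : a ≠ b) (hp0 : 0 < p) (hp1 : p < 1)
    (hP : P = ENNReal.ofReal p • Measure.dirac a + ENNReal.ofReal (1 - p) • Measure.dirac b) :
    stdMoment3 P = (1 - 2 * (p * (1 - p))) / Real.sqrt (p * (1 - p)) := by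
  set q : ℝ := p * (1 - p) with hq
  have hq0 : 0 < q := by nlinarith
  set r : ℝ := Real.sqrt q with hr
  have hr0 : 0 < r := Real.sqrt_pos.2 hq0
  have hr2 : r ^ 2 = q := Real.sq_sqrt hq0.le
  set e : ℝ := |a - b| with he
  have he0 : 0 < e := abs_pos.2 (sub_ne_zero.2 hab)
  have hμ : mmean P = p * a + (1 - p) * b := tp_mmean hp0.le hp1.le hP
  have hs : msd P = r * e := tp_msd hp0.le hp1.le hP
  have hmm : Measurable fun x : ℝ => (x - mmean P) / msd P := by fun_prop
  have hmap : stdMoment3 P = ∫ x, |(x - mmean P) / msd P| ^ 3 ∂P := by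
    rw [stdMoment3, standardize,
      integral_map hmm.aemeasurable ((measurable_abs.pow_const 3).aestronglyMeasurable)]
  rw [hmap, tp_integral hp0.le hp1.le hP, hμ, hs]
  have ha' : a - (p * a + (1 - p) * b) = (1 - p) * (a - b) := by ring
  have hb' : b - (p * a + (1 - p) * b) = -(p * (a - b)) := by ring
  rw [ha', hb']
  simp only [abs_div, abs_mul, abs_neg, abs_of_pos hp0, abs_of_pos hr0, abs_of_pos he0,
    abs_of_pos (show (0:ℝ) < 1 - p by linarith), ← he]
  field_simp
  rw [hq] at hr2 ⊢
  linear_combination (-(1 - 2 * (p * (1 - p)))) * hr2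

theorem tp_Bfn (hab : a ≠ b) (hp0 : 0 < p) (hp1 : p < 1)
    (hP : P = ENNReal.ofReal p • Measure.dirac a + ENNReal.ofReal (1 - p) • Measure.dirac b)
    (hT : 0 ≤ ∫ x, (x - mmean P) ^ 3 ∂P) :
    Bfn (stdMoment3 P) = (∫ x, (x - mmean P) ^ 3 ∂P) / msd P ^ 3 := by
  have hq0 : 0 < p * (1 - p) := by nlinarith
  have hs : msd P = Real.sqrt (p * (1 - p)) * |a - b| := tp_msd hp0.le hp1.le hP
  have hρ : stdMoment3 P = (1 - 2 * (p * (1 - p))) / Real.sqrt (p * (1 - p)) :=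
    tp_stdMoment3 hab hp0 hp1 hP
  have hT3 : ∫ x, (x - mmean P) ^ 3 ∂P = p * (1 - p) * (1 - 2 * p) * (a - b) ^ 3 :=
    tp_third hp0.le hp1.le hP
  set r : ℝ := Real.sqrt (p * (1 - p)) with hrdef
  set e : ℝ := |a - b| with hedef
  have hr0 : 0 < r := Real.sqrt_pos.2 hq0
  have hr2 : r ^ 2 = p * (1 - p) := Real.sq_sqrt hq0.le
  have he0 : 0 < e := abs_pos.2 (sub_ne_zero.2 hab)
  have he2 : e ^ 2 = (a - b) ^ 2 := sq_abs _
  have he6 : e ^ 6 = (a - b) ^ 6 := by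
    rw [show (6:ℕ) = 2 * 3 from rfl, pow_mul, pow_mul, he2]
  set γ : ℝ := (∫ x, (x - mmean P) ^ 3 ∂P) / msd P ^ 3 with hγdef
  have hγ0 : 0 ≤ γ := div_nonneg hT (by rw [hs]; positivity)
  have hγ1 : γ = (1 - 2 * p) * (a - b) ^ 3 / (r * e ^ 3) := by
    rw [hγdef, hT3, hs]
    rw [mul_pow]
    field_simp
    linear_combination (-(1 - 2 * p)) * hr2
  have hγ2 : γ ^ 2 = (1 - 4 * (p * (1 - p))) / (p * (1 - p)) := by
    rw [hγ1]
    field_simp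
    rw [eq_div_iff (by linarith : (1 - p) ≠ 0)]
    linear_combination (-(1 - 4 * (p * (1 - p))) * r ^ 2) * he6 +
      (-(1 - 4 * (p * (1 - p))) * (a - b) ^ 6) * hr2
  have h8 : stdMoment3 P ^ 2 + 8 = ((1 + 2 * (p * (1 - p))) / r) ^ 2 := by
    rw [hρ]
    field_simp
    linear_combination (8 : ℝ) * hr2
  have hsq8 : Real.sqrt (stdMoment3 P ^ 2 + 8)
      = (1 + 2 * (p * (1 - p))) / r := by
    rw [h8, Real.sqrt_sq (by positivity)]
  have hX : stdMoment3 P ^ 2 / 2 + stdMoment3 P / 2 * Real.sqrt (stdMoment3 P ^ 2 + 8) - 2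
      = (1 - 4 * (p * (1 - p))) / (p * (1 - p)) := by
    rw [hsq8, hρ]
    field_simp
    rw [eq_div_iff (by linarith : (1 - p) ≠ 0)]
    linear_combination (4 * (p * (1 - p)) - 2) * hr2
  rw [Bfn, hX, ← hγ2, Real.sqrt_sq hγ0]

end TwoPointFacts

theorem stdConv_third {n : ℕ} (P : Fin n → Measure ℝ) [∀ i, IsProbabilityMeasure (P i)]
    (hint : ∀ i (c : ℕ), Integrable (fun x => (x - mmean (P i)) ^ c) (P i))
    (hcent : ∀ i, ∫ x, (x - mmean (P i)) ∂(P i) = 0) :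
    ∫ x, x ^ 3 ∂(stdConvFamily P)
      = (∑ i, ∫ x, (x - mmean (P i)) ^ 3 ∂(P i)) / Real.sqrt (∑ i, msd (P i) ^ 2) ^ 3 := by
  have hsum_meas : Measurable (fun x : Fin n → ℝ => ∑ i, x i) :=
    Finset.measurable_sum _ (fun i _ => measurable_pi_apply i)
  have hg : Measurable (fun x : ℝ =>
      (x - ∑ i, mmean (P i)) / Real.sqrt (∑ i, msd (P i) ^ 2)) := by fun_prop
  rw [stdConvFamily, convFamily, Measure.map_map hg hsum_meas]
  have hf : Measurable fun x : ℝ => x ^ 3 := by fun_prop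
  rw [integral_map (hg.comp hsum_meas).aemeasurable hf.aestronglyMeasurable]
  simp only [Function.comp_apply]
  simp_rw [div_pow, ← Finset.sum_sub_distrib]
  rw [integral_div, conv_third P _ hint hcent]

theorem twoPoint_rep (σ : ℝ) :
    twoPoint σ = ENNReal.ofReal (1/2 : ℝ) • Measure.dirac (-σ)
      + ENNReal.ofReal (1 - 1/2 : ℝ) • Measure.dirac σ := by
  have h : ENNReal.ofReal (1/2 : ℝ) = (1/2 : ℝ≥0∞) := by
    rw [ENNReal.ofReal_div_of_pos (by norm_num)]
    norm_num
  rw [twoPoint, show (1 - 1/2 : ℝ) = 1/2 by norm_num, h]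

/-- **Theorem (equality case).** If each `Pᵢ` is a two-point law with centred third
moments all `≥ 0`, then for `f(x) = x³` equality holds:
`|∫ f d(std conv Pᵢ) − ∫ f d(std conv Qᵢ)| = Σᵢ (σᵢ³/σ³) B(ρᵢ)`. -/
theorem berry_esseen_smooth_equality
    {n : ℕ} (hn : 0 < n)
    (P : Fin n → Measure ℝ) [∀ i, IsProbabilityMeasure (P i)]
    (hmom : ∀ i, Integrable (fun x => |x| ^ 3) (P i))
    (hsd : ∀ i, 0 < msd (P i))
    (htwo : ∀ i, ∃ a b : ℝ, a ≠ b ∧ ∃ p : ℝ, 0 < p ∧ p < 1 ∧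
      P i = ENNReal.ofReal p • Measure.dirac a + ENNReal.ofReal (1 - p) • Measure.dirac b)
    (hthird : ∀ i, 0 ≤ ∫ x, (x - mmean (P i)) ^ 3 ∂(P i)) :
    |(∫ x, x ^ 3 ∂(stdConvFamily P)) -
        ∫ x, x ^ 3 ∂(stdConvFamily fun i => twoPoint (msd (P i)))| =
      ∑ i, msd (P i) ^ 3 / Real.sqrt (∑ j, msd (P j) ^ 2) ^ 3 * Bfn (stdMoment3 (P i)) := by
  classical
  have hint : ∀ i (c : ℕ), Integrable (fun x => (x - mmean (P i)) ^ c) (P i) := by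
    intro i c
    obtain ⟨a, b, hab, p, hp0, hp1, hP⟩ := htwo i
    exact tp_integrable hP _
  have hcent : ∀ i, ∫ x, (x - mmean (P i)) ∂(P i) = 0 := by
    intro i
    obtain ⟨a, b, hab, p, hp0, hp1, hP⟩ := htwo i
    exact tp_cent hp0.le hp1.le hP
  have hQrep : ∀ i, twoPoint (msd (P i))
      = ENNReal.ofReal (1/2 : ℝ) • Measure.dirac (-(msd (P i)))
        + ENNReal.ofReal (1 - 1/2 : ℝ) • Measure.dirac (msd (P i)) :=
    fun i => twoPoint_rep _
  haveI hQprob : ∀ i, IsProbabilityMeasure (twoPoint (msd (P i))) :=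
    fun i => tp_prob (by norm_num) (by norm_num) (hQrep i)
  have hQint : ∀ i (c : ℕ),
      Integrable (fun x => (x - mmean (twoPoint (msd (P i)))) ^ c) (twoPoint (msd (P i))) :=
    fun i c => tp_integrable (hQrep i) _
  have hQcent : ∀ i, ∫ x, (x - mmean (twoPoint (msd (P i)))) ∂(twoPoint (msd (P i))) = 0 :=
    fun i => tp_cent (by norm_num) (by norm_num) (hQrep i)
  have hQthird : ∀ i, ∫ x, (x - mmean (twoPoint (msd (P i)))) ^ 3 ∂(twoPoint (msd (P i))) = 0 := by
    intro i
    rw [tp_third (p := (1/2 : ℝ)) (by norm_num) (by norm_num) (hQrep i)]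
    ring
  rw [stdConv_third P hint hcent,
    stdConv_third (fun i => twoPoint (msd (P i))) hQint hQcent,
    Finset.sum_eq_zero (fun i _ => hQthird i), zero_div, sub_zero]
  haveI : Nonempty (Fin n) := Fin.pos_iff_nonempty.mp hn
  have hS0 : 0 < Real.sqrt (∑ j, msd (P j) ^ 2) :=
    Real.sqrt_pos.2 (Finset.sum_pos (fun i _ => pow_pos (hsd i) 2) Finset.univ_nonempty)
  rw [abs_of_nonneg (div_nonneg (Finset.sum_nonneg fun i _ => hthird i) (by positivity)),
    Finset.sum_div]
  refine Finset.sum_congr rfl fun i _ => ?_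
  obtain ⟨a, b, hab, p, hp0, hp1, hP⟩ := htwo i
  rw [tp_Bfn hab hp0 hp1 hP (hthird i)]
  have hσ : (0:ℝ) < msd (P i) := hsd i
  field_simp
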